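/- Define the state invariant: after reading the first i digit-triples of (a,b,c) (least significant first), the automaton of the previous context is in state (s,t) where s = ⌊((a mod 2^i) + (b mod 2^i))/2^i⌋ and t = [((a + b) mod 2^i) > (c mod 2^i)]. This invariant holds for all i ≥ 0. -/

import Mathlib

def cmpStep (st : ℕ × ℕ) (inp : ℕ × ℕ × ℕ) : ℕ × ℕ :=
  ((inp.1 + inp.2.1 + st.1) / 2,
    if ((inp.2.2 : ℤ) - st.2 < ((inp.1 + inp.2.1 + st.1) % 2 : ℕ)) then 1 else 0)

/-- State invariant of the comparison automaton: after reading the `i` least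
significant digit-triples of `(a,b,c)`, the state is
`(⌊((a mod 2^i)+(b mod 2^i))/2^i⌋, [(a+b) mod 2^i > c mod 2^i])`. -/
theorem cmp_automaton_invariant (a b c : ℕ) (i : ℕ) :
    ((List.range i).map
        (fun j => (a / 2 ^ j % 2, b / 2 ^ j % 2, c / 2 ^ j % 2))).foldl
        cmpStep (0, 0) =
      ((a % 2 ^ i + b % 2 ^ i) / 2 ^ i,
        if c % 2 ^ i < (a + b) % 2 ^ i then 1 else 0) := by
  induction i with
  | zero => simp [Prod.ext_iff, Nat.mod_one]
  | succ i ih =>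
    rw [List.range_succ, List.map_append, List.foldl_append, ih]
    simp only [List.map_cons, List.map_nil, List.foldl_cons, List.foldl_nil, cmpStep]
    have hN2 : (2:ℕ) ^ (i+1) = 2 ^ i * 2 := pow_succ 2 i
    set N := 2 ^ i with hN
    have hNpos : 0 < N := Nat.pow_pos (by norm_num)
    set α := a / N % 2 with hα
    set β := b / N % 2 with hβ
    set γ := c / N % 2 with hγ
    set ra := a % N with hra
    set rb := b % N with hrb
    set rc := c % N with hrc
    set s := (ra + rb) / N with hs
    set r := (ra + rb) % N with hr
    have hsr : N * s + r = ra + rb := Nat.div_add_mod _ _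
    have hraN : ra < N := Nat.mod_lt _ hNpos
    have hrbN : rb < N := Nat.mod_lt _ hNpos
    have hrcN : rc < N := Nat.mod_lt _ hNpos
    have hrN : r < N := Nat.mod_lt _ hNpos
    have hs1 : s ≤ 1 := by
      rw [hs]; exact Nat.lt_succ_iff.mp (Nat.div_lt_of_lt_mul (by omega))
    have hα1 : α ≤ 1 := Nat.lt_succ_iff.mp (Nat.mod_lt _ (by norm_num))
    have hβ1 : β ≤ 1 := Nat.lt_succ_iff.mp (Nat.mod_lt _ (by norm_num))
    have hγ1 : γ ≤ 1 := Nat.lt_succ_iff.mp (Nat.mod_lt _ (by norm_num))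
    have hma : a % (N * 2) = ra + N * α := Nat.mod_mul
    have hmb : b % (N * 2) = rb + N * β := Nat.mod_mul
    have hmc : c % (N * 2) = rc + N * γ := Nat.mod_mul
    set m := (α + β + s) % 2 with hm
    have hm1 : m ≤ 1 := Nat.lt_succ_iff.mp (Nat.mod_lt _ (by norm_num))
    set q := (α + β + s) / 2 with hq
    have hqm : 2 * q + m = α + β + s := Nat.div_add_mod _ _
    have habN : (a + b) % N = r := by rw [hr, hra, hrb, Nat.add_mod]
    -- sum mod N*2
    clear_value N α β γ ra rb rc s r m q
    clear ih hN hα hβ hγ hra hrb hrc hs hr hm hq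
    have hNm : N * m ≤ N := by simpa using Nat.mul_le_mul_left N hm1
    have hab2 : (a + b) % (N * 2) = N * m + r := by
      rw [Nat.add_mod, hma, hmb]
      have h : ra + N * α + (rb + N * β) = N * 2 * q + (N * m + r) := by
        zify
        zify at hqm hsr
        linear_combination hsr.symm - (N : ℤ) * hqm
      rw [h, Nat.mul_add_mod, Nat.mod_eq_of_lt (by omega)]
    -- first component
    have hfst : (a % (N * 2) + b % (N * 2)) / (N * 2) = q := by
      rw [hma, hmb]
      have h : ra + N * α + (rb + N * β) = N * (α + β + s) + r := by
        zify; zify at hsr; linear_combination hsr.symm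
      rw [h, ← Nat.div_div_eq_div_mul, Nat.mul_add_div hNpos,
        Nat.div_eq_of_lt hrN, Nat.add_zero, ← hqm, Nat.mul_add_div (by norm_num),
        Nat.div_eq_of_lt (by omega), Nat.add_zero]
    rw [hN2, Prod.ext_iff, habN]
    refine ⟨hfst.symm, ?_⟩
    rw [hmc, hab2]
    rcases Nat.le_one_iff_eq_zero_or_eq_one.mp hγ1 with h1 | h1 <;>
      rcases Nat.le_one_iff_eq_zero_or_eq_one.mp hm1 with h2 | h2 <;>
        rw [h1, h2] <;> split_ifs <;> omega
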